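/- If ε and K satisfy ∂ₜε = -ηεK, ∂ₜK = -2ηλεK with conserved quantity C = K - 2λε = 0, then K(t) = 2λε(t) = 2/(2ηt + B₂⁻¹) for some constant B₂ > 0; in particular both K and ε decay polynomially like 1/(ηt) as t → ∞. -/

import Mathlib

open Set Filter

/-- Critical-point solution of the generalized Lotka-Volterra equations
`∂ₜε = -ηεK`, `∂ₜK = -2ηλεK` when the conserved quantity `C = K - 2λε`
vanishes: `K(t) = 2λε(t) = 2/(2ηt + B₂⁻¹)` for some `B₂ > 0`; in particular
both `K` and `ε` decay polynomially like `1/(ηt)` as `t → ∞`. -/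
theorem lv_solution_critical (η lam : ℝ) (hη : 0 < η) (hlam : 0 < lam)
    (ε K : ℝ → ℝ)
    (hε : ∀ t, 0 ≤ t → HasDerivAt ε (-(η * ε t * K t)) t)
    (hK : ∀ t, 0 ≤ t → HasDerivAt K (-(2 * η * lam * ε t * K t)) t)
    (hC : K 0 - 2 * lam * ε 0 = 0) (hK0 : 0 < K 0) :
    ∃ B₂ : ℝ, 0 < B₂ ∧
      (∀ t, 0 ≤ t → K t = 2 * lam * ε t ∧ K t = 2 / (2 * η * t + B₂⁻¹)) ∧
      Filter.Tendsto (fun t => η * t * K t) Filter.atTop (nhds 1) ∧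
      Filter.Tendsto (fun t => η * t * ε t) Filter.atTop (nhds (1 / (2 * lam))) := by
  -- Step 1: the conserved quantity vanishes for all t ≥ 0, i.e. K t = 2 λ ε t.
  have hKcont : ∀ t, 0 ≤ t → ContinuousAt K t := fun t ht => (hK t ht).continuousAt
  have hεcont : ∀ t, 0 ≤ t → ContinuousAt ε t := fun t ht => (hε t ht).continuousAt
  have hDderiv : ∀ t, 0 ≤ t →
      HasDerivAt (fun s => K s - 2 * lam * ε s) 0 t := by
    intro t ht
    have := (hK t ht).sub (((hε t ht).const_mul (2 * lam)))
    exact this.congr_deriv (by ring)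
  have hstep1 : ∀ t, 0 ≤ t → K t = 2 * lam * ε t := by
    intro t ht
    have hc : ContinuousOn (fun s => K s - 2 * lam * ε s) (Icc 0 t) := fun s hs =>
      (((hKcont s hs.1).sub ((hεcont s hs.1).const_mul _)).continuousWithinAt)
    have := constant_of_has_deriv_right_zero hc
      (fun x hx => (hDderiv x hx.1).hasDerivWithinAt) t ⟨ht, le_refl t⟩
    have h0 := this.trans hC
    linarith
  -- hence K' t = -η (K t)^2 for t ≥ 0
  have hK' : ∀ t, 0 ≤ t → HasDerivAt K (-(η * (K t) ^ 2)) t := by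
    intro t ht
    have := hK t ht
    have h1 := hstep1 t ht
    convert this using 1
    rw [h1]; ring
  set c : ℝ := (K 0)⁻¹ with hc
  have hcpos : 0 < c := inv_pos.2 hK0
  -- Step 2: K t = (η t + c)⁻¹ for all t ≥ 0, by continuous induction.
  set s : Set ℝ := {t | K t = (η * t + c)⁻¹} with hs
  have h0s : (0 : ℝ) ∈ s := by
    simp only [hs, mem_setOf_eq, mul_zero, zero_add, hc, inv_inv]
  have key : ∀ T : ℝ, 0 ≤ T → Icc (0:ℝ) T ⊆ s := by
    intro T hT
    apply IsClosed.Icc_subset_of_forall_exists_gt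
    · -- closedness of s ∩ Icc 0 T
      have hcont : ContinuousOn (fun t => K t - (η * t + c)⁻¹) (Icc 0 T) := by
        intro x hx
        apply ContinuousWithinAt.sub ((hKcont x hx.1).continuousWithinAt)
        apply ContinuousWithinAt.inv₀
        · exact (continuousWithinAt_id.const_smul η).add continuousWithinAt_const
        · have hx0 : (0:ℝ) ≤ x := hx.1
          have : (0:ℝ) < η * x + c := by nlinarith
          exact this.ne'
      have : s ∩ Icc 0 T = Icc 0 T ∩ (fun t => K t - (η * t + c)⁻¹) ⁻¹' {0} := by
        ext x
        simp only [hs, mem_inter_iff, mem_setOf_eq, mem_preimage, mem_singleton_iff,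
          sub_eq_zero, and_comm]
      rw [this]
      exact hcont.preimage_isClosed_of_isClosed isClosed_Icc isClosed_singleton
    · exact h0s
    · -- induction step
      rintro x ⟨hxs, hx0, hxT⟩ y hy
      have hKx : K x = (η * x + c)⁻¹ := hxs
      have hKxpos : 0 < K x := by rw [hKx]; positivity
      -- K is positive in a neighborhood of x
      have hev : ∀ᶠ z in nhds x, 0 < K z := (hKcont x hx0).eventually (eventually_gt_nhds hKxpos)
      rcases Metric.eventually_nhds_iff.1 hev with ⟨δ, hδ, hball⟩
      set z : ℝ := min y (x + δ / 2) with hz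
      have hxz : x < z := lt_min hy (by linarith)
      refine ⟨z, ?_, hxz, min_le_left _ _⟩
      -- show K z = (η z + c)⁻¹ by integrating (1/K)' = η on [x, z]
      have hpos : ∀ w ∈ Icc x z, 0 < K w := by
        intro w hw
        apply hball
        have : w ≤ x + δ / 2 := hw.2.trans (min_le_right _ _)
        rw [Real.dist_eq, abs_lt]
        constructor <;> [linarith [hw.1]; linarith]
      have hw0 : ∀ w ∈ Icc x z, (0:ℝ) ≤ w := fun w hw => le_trans hx0 hw.1
      have hu : ∀ w ∈ Ico x z,
          HasDerivWithinAt (fun t => (K t)⁻¹ - η * t) 0 (Ici w) w := by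
        intro w hw
        have hw' : w ∈ Icc x z := ⟨hw.1, hw.2.le⟩
        have hKw := hpos w hw'
        have h1 : HasDerivAt (fun t => (K t)⁻¹)
            (-(-(η * (K w) ^ 2)) / (K w) ^ 2) w := (hK' w (hw0 w hw')).inv hKw.ne'
        have h2 : HasDerivAt (fun t => (K t)⁻¹ - η * t)
            (-(-(η * (K w) ^ 2)) / (K w) ^ 2 - η) w :=
          h1.sub (by simpa using (hasDerivAt_id w).const_mul η)
        have : -(-(η * (K w) ^ 2)) / (K w) ^ 2 - η = 0 := by
          field_simp
          ring
        rw [this] at h2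
        exact h2.hasDerivWithinAt
      have hucont : ContinuousOn (fun t => (K t)⁻¹ - η * t) (Icc x z) := by
        intro w hw
        exact (((hKcont w (hw0 w hw)).inv₀ (hpos w hw).ne').sub
          ((continuous_const.mul continuous_id).continuousAt)).continuousWithinAt
      have := constant_of_has_deriv_right_zero hucont hu z ⟨hxz.le, le_refl z⟩
      -- (K z)⁻¹ - η z = (K x)⁻¹ - η x
      have hKzinv : (K z)⁻¹ = η * z + c := by
        have hKxinv : (K x)⁻¹ = η * x + c := by
          rw [hKx, inv_inv]
        have : (K z)⁻¹ - η * z = (K x)⁻¹ - η * x := this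
        rw [hKxinv] at this
        linarith
      have hKzpos := hpos z ⟨hxz.le, le_refl z⟩
      show K z = (η * z + c)⁻¹
      rw [← hKzinv, inv_inv]
  have hform : ∀ t, 0 ≤ t → K t = (η * t + c)⁻¹ := fun t ht =>
    key t ht ⟨ht, le_refl t⟩
  -- Assemble the answer with B₂ = K 0 / 2.
  refine ⟨K 0 / 2, by positivity, ?_, ?_, ?_⟩
  · intro t ht
    refine ⟨hstep1 t ht, ?_⟩
    rw [hform t ht]
    rw [show (K 0 / 2)⁻¹ = 2 * c by rw [hc]; field_simp]
    rw [eq_div_iff (by positivity)]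
    have : (0:ℝ) < η * t + c := by positivity
    field_simp
  · -- limit of η t K t
    have hev : (fun t => η * t * K t) =ᶠ[atTop] (fun t => 1 - c / (η * t + c)) := by
      filter_upwards [eventually_ge_atTop (0:ℝ)] with t ht
      rw [hform t ht]
      have h1 : (0:ℝ) < η * t + c := by positivity
      field_simp
      ring
    rw [show (1:ℝ) = 1 - 0 by ring]
    refine Tendsto.congr' hev.symm (Tendsto.sub tendsto_const_nhds ?_)
    apply Tendsto.div_atTop tendsto_const_nhds
    apply tendsto_atTop_add_const_right
    exact (tendsto_id.const_mul_atTop hη)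
  · -- limit of η t ε t
    have hev : (fun t => η * t * ε t) =ᶠ[atTop] (fun t => (η * t * K t) / (2 * lam)) := by
      filter_upwards [eventually_ge_atTop (0:ℝ)] with t ht
      rw [hstep1 t ht]
      field_simp
    have h1 : Tendsto (fun t => η * t * K t) atTop (nhds 1) := by
      have hev2 : (fun t => η * t * K t) =ᶠ[atTop] (fun t => 1 - c / (η * t + c)) := by
        filter_upwards [eventually_ge_atTop (0:ℝ)] with t ht
        rw [hform t ht]
        have h1 : (0:ℝ) < η * t + c := by positivity
        field_simp
        ring
      rw [show (1:ℝ) = 1 - 0 by ring]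
      refine Tendsto.congr' hev2.symm (Tendsto.sub tendsto_const_nhds ?_)
      apply Tendsto.div_atTop tendsto_const_nhds
      apply tendsto_atTop_add_const_right
      exact (tendsto_id.const_mul_atTop hη)
    have := h1.div_const (2 * lam)
    rw [show (1:ℝ) / (2 * lam) = 1 / (2 * lam) by ring] at this
    exact Tendsto.congr' hev.symm this
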